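/- Suppose the machine M is FTA-compliant with the Starlight architectural specification (SL, C_SL), i.e., FTA-compliant with (SL, ℐ) for some interpretation ℐ ∈ C_SL. If π(p) is a proposition that is toggle-High dependent at α, then M,π,α ⊨ ¬K_L p. -/
import Mathlib


structure Machine (S A D O : Type) where
  s0 : S
  step : S → A → S
  dom : A → D
  obs : D → S → O

namespace Machine

def run {S A D O : Type} (M : Machine S A D O) (α : List A) : S :=
  α.foldl M.step M.s0

end Machine
/-- Elements of a view: actions or (group) observations. -/
inductive VE (A O' : Type) where
  | act : A → VE A O'
  | obs : O' → VE A O'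

open Classical in
/-- Absorptive concatenation: `σ ∘ x` is `σ` if `x` equals the last element of `σ`,
and `σ ++ [x]` otherwise. -/
noncomputable def absorb {X : Type} (σ : List X) (x : X) : List X :=
  if σ.getLast? = some x then σ else σ ++ [x]

open Classical in
/-- View of a group `G`, computed on the reversed action sequence. -/
noncomputable def viewR {S A D O : Type} (M : Machine S A D O) (G : Set D) :
    List A → List (VE A (G → O))
  | [] => [VE.obs (fun u : G => M.obs u.1 M.s0)]
  | a :: ρ =>
    let o : VE A (G → O) := VE.obs (fun u : G => M.obs u.1 (M.run ((a :: ρ).reverse)))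
    if M.dom a ∈ G then viewR M G ρ ++ [VE.act a, o] else absorb (viewR M G ρ) o

/-- The view of group `G` of the action sequence `α`. -/
noncomputable def view {S A D O : Type} (M : Machine S A D O) (G : Set D) (α : List A) :
    List (VE A (G → O)) :=
  viewR M G α.reverse
/-- Formulas of the epistemic logic (without distributed knowledge). -/
inductive Formula (PC D : Type) where
  | tru : Formula PC D
  | atom : PC → Formula PC D
  | neg : Formula PC D → Formula PC D
  | conj : Formula PC D → Formula PC D → Formula PC D
  | know : Set D → Formula PC D → Formula PC D

/-- Satisfaction relation `M,π,α ⊨ φ`. -/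
def sat {S A D O PC : Type} (M : Machine S A D O) (π : PC → Set (List A)) :
    List A → Formula PC D → Prop
  | _, .tru => True
  | α, .atom p => α ∈ π p
  | α, .neg φ => ¬ sat M π α φ
  | α, .conj φ ψ => sat M π α φ ∧ sat M π α ψ
  | α, .know G φ => ∀ α', view M G α' = view M G α → sat M π α' φ
/-- An extended architecture: `edge u v = none` means no edge, `edge u v = some none`
means an edge labelled `⊤`, and `edge u v = some (some f)` means an edge labelled by
the filter-function name `f`.  There is at most one label per ordered pair by
construction, and the relation is reflexive with label `⊤`. -/
structure ExtArch (D L : Type) where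
  edge : D → D → Option (Option L)
  refl : ∀ u, edge u u = some none

/-- Values of the `tf` function and of filter-function interpretations:
`eps` is the empty value ε, `base v` an arbitrary basic value, and
`pair σ a` the pair `(σ, a)` of a `tf` value and an action. -/
inductive TFVal (A V : Type) where
  | eps : TFVal A V
  | base : V → TFVal A V
  | pair : List (TFVal A V) → A → TFVal A V

/-- `σ ⌢ x`: appends `x` as a single new last element unless `x = ε`. -/
def snoc' {A V : Type} (σ : List (TFVal A V)) : TFVal A V → List (TFVal A V)
  | .eps => σ
  | x => σ ++ [x]

/-- `tf`, computed on the reversed action sequence. -/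
def tfR {A D L V : Type} (Arch : ExtArch D L) (dm : A → D)
    (I : L → List A → A → TFVal A V) : List A → D → List (TFVal A V)
  | [], _ => []
  | a :: ρ, u =>
    match Arch.edge (dm a) u with
    | none => tfR Arch dm I ρ u
    | some none => tfR Arch dm I ρ u ++ [TFVal.pair (tfR Arch dm I ρ (dm a)) a]
    | some (some f) => snoc' (tfR Arch dm I ρ u) (I f ρ.reverse a)

/-- `tf Arch dm I α u` : maximal information domain `u` is permitted to have after `α`. -/
def tf {A D L V : Type} (Arch : ExtArch D L) (dm : A → D)
    (I : L → List A → A → TFVal A V) (α : List A) (u : D) : List (TFVal A V) :=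
  tfR Arch dm I α.reverse u

/-- `inF Arch dm I α a u` : the information `in_{dom(a),u}(α, a)` transmitted to `u`
when action `a` is performed after `α`. -/
def inF {A D L V : Type} (Arch : ExtArch D L) (dm : A → D)
    (I : L → List A → A → TFVal A V) (α : List A) (a : A) (u : D) : TFVal A V :=
  match Arch.edge (dm a) u with
  | none => TFVal.eps
  | some none => TFVal.pair (tf Arch dm I α (dm a)) a
  | some (some f) => I f α a
/-- FTA-compliance of a machine with an interpreted extended architecture
(whose actions, domains and domain function are those of the machine). -/
def FTACompliant {S A D O L V : Type} (M : Machine S A D O) (Arch : ExtArch D L)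
    (I : L → List A → A → TFVal A V) : Prop :=
  ∀ (u : D) (α α' : List A), tf Arch M.dom I α u = tf Arch M.dom I α' u →
    M.obs u (M.run α) = M.obs u (M.run α')

/-- The three domains of the Starlight architecture `SL`. -/
inductive SLDom where
  | H : SLDom
  | L : SLDom
  | S : SLDom
deriving DecidableEq

/-- The Starlight extended architecture: reflexive `⊤`-edges, `L ↝_⊤ H`,
`S ↝_⊤ H` and `S ↝_sf L` (the label set is `Unit`, with `()` standing for `sf`). -/
def SLArch : ExtArch SLDom Unit where
  edge u v :=
    match u, v with
    | .H, .H => some none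
    | .L, .L => some none
    | .S, .S => some none
    | .L, .H => some none
    | .S, .H => some none
    | .S, .L => some (some ())
    | _, _ => none
  refl u := by cases u <;> rfl

open Classical in
/-- The number of occurrences of the toggle action `t` in `α`. -/
noncomputable def countT {A : Type} (t : A) (α : List A) : ℕ :=
  (α.filter (fun a => decide (a = t))).length

open Classical in
/-- `togL dm t α`: with `α = α₀ t α₁ t … t αₙ` the canonical form (each `αᵢ`
containing no `t`), this is `(α₀↾{L}) t (α₁↾{L,S}) t (α₂↾{L}) t … t (αₙ↾Hₙ)`,
where `Hₙ = {L}` for even `n` and `Hₙ = {L,S}` for odd `n`; computed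
element-wise with a counter of the `t`s seen so far. -/
noncomputable def togL {A : Type} (dm : A → SLDom) (t : A) (α : List A) : List A :=
  (α.foldl (fun (st : ℕ × List A) a =>
    if a = t then (st.1 + 1, st.2 ++ [a])
    else if dm a = SLDom.L ∨ (dm a = SLDom.S ∧ Odd st.1) then (st.1, st.2 ++ [a])
    else st) (0, ([] : List A))).2

open Classical in
/-- Membership in the Starlight architectural specification `C_SL`, with
distinguished toggle action `t`: the filter function `sf` passes the action
itself (encoded as `TFVal.base a`) exactly when `a = t` or an odd number of
toggles has occurred and `a` is an `S` action; otherwise it passes `ε`. -/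
def memCSL {A : Type} (dm : A → SLDom) (t : A)
    (I : Unit → List A → A → TFVal A A) : Prop :=
  dm t = SLDom.S ∧
    ∀ (α : List A) (a : A),
      I () α a =
        if a = t ∨ (Odd (countT t α) ∧ dm a = SLDom.S) then TFVal.base a
        else TFVal.eps

section Aux

open Classical

/-- Snoc equation for `countT`. -/
lemma countT_snoc {A : Type} (t : A) (γ : List A) (a : A) :
    countT t (γ ++ [a]) = countT t γ + (if a = t then 1 else 0) := by
  unfold countT
  rw [List.filter_append]
  by_cases h : a = t <;> simp [h]

/-- The first component of the `togL` fold counts the `t`s. -/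
lemma togL_fold_fst {A : Type} (dm : A → SLDom) (t : A) (γ : List A) :
    ∀ (n : ℕ) (acc : List A),
      (γ.foldl (fun (st : ℕ × List A) a =>
        if a = t then (st.1 + 1, st.2 ++ [a])
        else if dm a = SLDom.L ∨ (dm a = SLDom.S ∧ Odd st.1) then (st.1, st.2 ++ [a])
        else st) (n, acc)).1 = n + countT t γ := by
  induction γ with
  | nil => intro n acc; simp [countT]
  | cons a γ ih =>
    intro n acc
    by_cases h : a = t
    · simp only [List.foldl_cons, if_pos h, ih]
      unfold countT
      simp [h]
      omega
    · by_cases h2 : dm a = SLDom.L ∨ (dm a = SLDom.S ∧ Odd n)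
      · simp only [List.foldl_cons, if_neg h, if_pos h2, ih]
        unfold countT; simp [h]
      · simp only [List.foldl_cons, if_neg h, if_neg h2, ih]
        unfold countT; simp [h]

/-- Snoc equation for `togL`. -/
lemma togL_snoc {A : Type} (dm : A → SLDom) (t : A) (γ : List A) (a : A) :
    togL dm t (γ ++ [a]) =
      if a = t ∨ dm a = SLDom.L ∨ (dm a = SLDom.S ∧ Odd (countT t γ)) then
        togL dm t γ ++ [a]
      else togL dm t γ := by
  unfold togL
  rw [List.foldl_append]
  have hfst := togL_fold_fst dm t γ 0 []
  by_cases h : a = t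
  · simp [h]
  · by_cases h2 : dm a = SLDom.L ∨ (dm a = SLDom.S ∧ Odd (countT t γ))
    · have h2' : dm a = SLDom.L ∨ (dm a = SLDom.S ∧
          Odd (γ.foldl (fun (st : ℕ × List A) a =>
            if a = t then (st.1 + 1, st.2 ++ [a])
            else if dm a = SLDom.L ∨ (dm a = SLDom.S ∧ Odd st.1) then (st.1, st.2 ++ [a])
            else st) (0, ([] : List A))).1) := by rw [hfst]; simpa using h2
      simp only [List.foldl_cons, List.foldl_nil, if_neg h, if_pos h2']
      simp [h, h2]
    · have h2' : ¬ (dm a = SLDom.L ∨ (dm a = SLDom.S ∧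
          Odd (γ.foldl (fun (st : ℕ × List A) a =>
            if a = t then (st.1 + 1, st.2 ++ [a])
            else if dm a = SLDom.L ∨ (dm a = SLDom.S ∧ Odd st.1) then (st.1, st.2 ++ [a])
            else st) (0, ([] : List A))).1)) := by rw [hfst]; simpa using h2
      simp only [List.foldl_cons, List.foldl_nil, if_neg h, if_neg h2']
      simp [h, h2]

/-- Snoc equation for `tf`. -/
lemma tf_snoc {A D L V : Type} (Arch : ExtArch D L) (dm : A → D)
    (I : L → List A → A → TFVal A V) (γ : List A) (a : A) (u : D) :
    tf Arch dm I (γ ++ [a]) u =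
      match Arch.edge (dm a) u with
      | none => tf Arch dm I γ u
      | some none => tf Arch dm I γ u ++ [TFVal.pair (tf Arch dm I γ (dm a)) a]
      | some (some f) => snoc' (tf Arch dm I γ u) (I f γ a) := by
  unfold tf
  have h : (γ ++ [a]).reverse = a :: γ.reverse := by simp
  rw [h]
  simp only [tfR, List.reverse_reverse]

/-- Snoc equation for `view`. -/
lemma view_snoc {S A D O : Type} (M : Machine S A D O) (G : Set D) (γ : List A) (a : A) :
    view M G (γ ++ [a]) =
      if M.dom a ∈ G then
        view M G γ ++ [VE.act a, VE.obs (fun u : G => M.obs u.1 (M.run (γ ++ [a])))]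
      else absorb (view M G γ) (VE.obs (fun u : G => M.obs u.1 (M.run (γ ++ [a])))) := by
  unfold view
  rw [List.reverse_append]
  simp only [List.reverse_singleton, List.singleton_append, viewR, List.reverse_reverse]
  by_cases h : M.dom a ∈ G <;> simp [h]

/-- The last element of a view is the current group observation. -/
lemma view_getLast {S A D O : Type} (M : Machine S A D O) (G : Set D) (γ : List A) :
    (view M G γ).getLast? = some (VE.obs (fun u : G => M.obs u.1 (M.run γ))) := by
  induction γ using List.reverseRecOn with
  | nil => simp [view, viewR, Machine.run]
  | append_singleton γ a ih =>
    rw [view_snoc]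
    by_cases h : M.dom a ∈ G
    · rw [if_pos h]
      rw [List.getLast?_append]
      simp
    · rw [if_neg h]
      unfold absorb
      by_cases h2 : (view M G γ).getLast? =
          some (VE.obs (fun u : G => M.obs u.1 (M.run (γ ++ [a]))))
      · rw [if_pos h2]; exact h2
      · rw [if_neg h2]
        rw [List.getLast?_append]
        simp

/-- `a = t` implies `dm a = S` (from `memCSL`). -/
lemma keep_cases {S A O : Type} {M : Machine S A SLDom O} {t : A}
    {I : Unit → List A → A → TFVal A A} (hI : memCSL M.dom t I) {a : A}
    (h : M.dom a = SLDom.H) (n : ℕ) :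
    ¬ (a = t ∨ M.dom a = SLDom.L ∨ (M.dom a = SLDom.S ∧ Odd n)) := by
  rintro (rfl | h2 | ⟨h2, _⟩)
  · rw [hI.1] at h; exact SLDom.noConfusion h
  · rw [h2] at h; exact SLDom.noConfusion h
  · rw [h2] at h; exact SLDom.noConfusion h

/-- Main invariant: `togL γ` preserves the `t`-count, the `tf`-value at `L`,
and the view of `{L}`. -/
lemma togL_invariant {S A O : Type} (M : Machine S A SLDom O) (t : A)
    (I : Unit → List A → A → TFVal A A) (hI : memCSL M.dom t I)
    (hFTA : FTACompliant M SLArch I) (γ : List A) :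
    countT t (togL M.dom t γ) = countT t γ ∧
    tf SLArch M.dom I (togL M.dom t γ) SLDom.L = tf SLArch M.dom I γ SLDom.L ∧
    view M {SLDom.L} (togL M.dom t γ) = view M {SLDom.L} γ := by
  induction γ using List.reverseRecOn with
  | nil => exact ⟨rfl, rfl, rfl⟩
  | append_singleton γ a ih =>
    obtain ⟨ihc, ihtf, ihv⟩ := ih
    rw [togL_snoc]
    by_cases hk : a = t ∨ M.dom a = SLDom.L ∨ (M.dom a = SLDom.S ∧ Odd (countT t γ))
    · rw [if_pos hk]
      -- the action is kept
      have hdomS : M.dom a = SLDom.L ∨ M.dom a = SLDom.S := by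
        rcases hk with rfl | h | ⟨h, _⟩
        · right; exact hI.1
        · left; exact h
        · right; exact h
      -- count claim
      have hc : countT t (togL M.dom t γ ++ [a]) = countT t (γ ++ [a]) := by
        rw [countT_snoc, countT_snoc, ihc]
      refine ⟨hc, ?_⟩
      -- tf claim
      have htf : tf SLArch M.dom I (togL M.dom t γ ++ [a]) SLDom.L =
          tf SLArch M.dom I (γ ++ [a]) SLDom.L := by
        rw [tf_snoc, tf_snoc]
        rcases hdomS with h | h
        · rw [h]
          show tf SLArch M.dom I (togL M.dom t γ) SLDom.L ++ _ =
            tf SLArch M.dom I γ SLDom.L ++ _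
          rw [ihtf]
        · rw [h]
          show snoc' (tf SLArch M.dom I (togL M.dom t γ) SLDom.L) (I () (togL M.dom t γ) a) =
            snoc' (tf SLArch M.dom I γ SLDom.L) (I () γ a)
          rw [ihtf]
          congr 1
          rw [hI.2, hI.2, ihc]
      refine ⟨htf, ?_⟩
      -- view claim
      have hobs : (fun u : ({SLDom.L} : Set SLDom) =>
            M.obs u.1 (M.run (togL M.dom t γ ++ [a]))) =
          (fun u : ({SLDom.L} : Set SLDom) => M.obs u.1 (M.run (γ ++ [a]))) := by
        funext u
        have hu : u.1 = SLDom.L := u.2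
        rw [hu]
        exact hFTA SLDom.L _ _ htf
      rw [view_snoc, view_snoc, hobs, ihv]
    · rw [if_neg hk]
      -- the action is dropped: tf at L is unchanged
      have htf0 : tf SLArch M.dom I (γ ++ [a]) SLDom.L = tf SLArch M.dom I γ SLDom.L := by
        rw [tf_snoc]
        cases hdom : M.dom a with
        | H => rfl
        | L => exact absurd (Or.inr (Or.inl hdom)) hk
        | S =>
          show snoc' (tf SLArch M.dom I γ SLDom.L) (I () γ a) = _
          have : I () γ a = TFVal.eps := by
            rw [hI.2]
            rw [if_neg]
            rintro (rfl | ⟨hodd, _⟩)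
            · exact hk (Or.inl rfl)
            · exact hk (Or.inr (Or.inr ⟨hdom, hodd⟩))
          rw [this]; rfl
      have hc : countT t (γ ++ [a]) = countT t γ := by
        rw [countT_snoc, if_neg (fun h => hk (Or.inl h))]
        omega
      refine ⟨by rw [ihc, hc], by rw [ihtf, htf0], ?_⟩
      -- view is unchanged by a dropped action
      have hdomL : M.dom a ∉ ({SLDom.L} : Set SLDom) := by
        intro h
        exact hk (Or.inr (Or.inl h))
      rw [view_snoc, if_neg hdomL]
      have hobs : (fun u : ({SLDom.L} : Set SLDom) => M.obs u.1 (M.run (γ ++ [a]))) =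
          (fun u : ({SLDom.L} : Set SLDom) => M.obs u.1 (M.run γ)) := by
        funext u
        have hu : u.1 = SLDom.L := u.2
        rw [hu]
        exact hFTA SLDom.L _ _ htf0
      rw [hobs]
      unfold absorb
      rw [if_pos]
      · exact ihv
      · exact view_getLast M {SLDom.L} γ

/-- Equal `togL` values give equal `{L}`-views. -/
lemma view_eq_of_togL_eq {S A O : Type} (M : Machine S A SLDom O) (t : A)
    (I : Unit → List A → A → TFVal A A) (hI : memCSL M.dom t I)
    (hFTA : FTACompliant M SLArch I) {α β : List A}
    (h : togL M.dom t α = togL M.dom t β) :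
    view M {SLDom.L} α = view M {SLDom.L} β := by
  have h1 := (togL_invariant M t I hI hFTA α).2.2
  have h2 := (togL_invariant M t I hI hFTA β).2.2
  rw [← h1, ← h2, h]

end Aux

/-- if `M` is FTA-compliant with `(SL, C_SL)` and `π(p)` is
toggle-High dependent at `α`, then `M,π,α ⊨ ¬K_L p`. -/
theorem statement8 {S A O PC : Type} (M : Machine S A SLDom O) (t : A)
    (I : Unit → List A → A → TFVal A A) (hI : memCSL M.dom t I)
    (hFTA : FTACompliant M SLArch I)
    (π : PC → Set (List A)) (p : PC) (α : List A)
    (hdep : ∃ β : List A, togL M.dom t α = togL M.dom t β ∧ (α ∈ π p ↔ β ∉ π p)) :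
    sat M π α (Formula.neg (Formula.know {SLDom.L} (Formula.atom p))) := by
  obtain ⟨β, htog, hiff⟩ := hdep
  intro hK
  have hview : view M {SLDom.L} β = view M {SLDom.L} α :=
    (view_eq_of_togL_eq M t I hI hFTA htog).symm
  have hα : α ∈ π p := hK α rfl
  have hβ : β ∈ π p := hK β hview
  exact (hiff.mp hα) hβ
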